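/- arXiv:2105.02495 — 4 statements merged into one kernel-verified Lean document; each statement's English description precedes it below -/
import Mathlib

section
/- Let γ : [0,1] → X be a continuous curve in a metric space with finite energy E(γ). Then for every ε > 0 there exists δ > 0 such that for every partition R of [0,1] with mesh |R| ≤ δ, one has E(γ, R) ≥ E(γ) − ε. In particular, E(γ, R) → E(γ) as |R| → 0. -/
open Set MeasureTheory Filter
open scoped ENNReal

/-- Energy sum of a curve along the partition points `r 0 < r 1 < ... < r (m+1)`. -/
noncomputable def energySum {X : Type*} [MetricSpace X] (γ : ℝ → X) {m : ℕ}
    (r : Fin (m + 2) → ℝ) : ℝ :=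
  ∑ k : Fin (m + 1), dist (γ (r k.castSucc)) (γ (r k.succ)) ^ 2 / (r k.succ - r k.castSucc)

/-- `r` enumerates a partition `0 = r 0 < r 1 < ... < r (m+1) = 1` of `[0, 1]`. -/
def IsPartition {m : ℕ} (r : Fin (m + 2) → ℝ) : Prop :=
  StrictMono r ∧ r 0 = 0 ∧ r (Fin.last (m + 1)) = 1

/-- The energy of a curve on `[0,1]`: supremum of the energy sums over all partitions. -/
noncomputable def energy {X : Type*} [MetricSpace X] (γ : ℝ → X) : ℝ≥0∞ :=
  ⨆ (m : ℕ) (r : Fin (m + 2) → ℝ) (_ : IsPartition r), ENNReal.ofReal (energySum γ r)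

lemma titu {u v s t : ℝ} (hs : 0 < s) (ht : 0 < t) :
    (u + v)^2 / (s + t) ≤ u^2/s + v^2/t := by
  rw [div_add_div _ _ (ne_of_gt hs) (ne_of_gt ht),
    div_le_div_iff₀ (by positivity) (by positivity)]
  nlinarith [sq_nonneg (u*t - v*s)]

lemma rho_strict (ρ : ℕ → ℝ) {N : ℕ} (h : ∀ k < N, ρ k < ρ (k+1)) :
    ∀ b ≤ N, ∀ a < b, ρ a < ρ b := by
  intro b
  induction b with
  | zero => omega
  | succ b ih =>
    intro hb a ha
    rcases Nat.lt_succ_iff_lt_or_eq.mp ha with h' | rfl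
    · exact (ih (by omega) a h').trans (h b (by omega))
    · exact h a (by omega)

lemma rho_mono (ρ : ℕ → ℝ) {N : ℕ} (h : ∀ k < N, ρ k < ρ (k+1)) :
    ∀ b ≤ N, ∀ a ≤ b, ρ a ≤ ρ b := by
  intro b hb a ha
  rcases eq_or_lt_of_le ha with rfl | h'
  · exact le_refl _
  · exact (rho_strict ρ h b hb a h').le

lemma block {X : Type*} [MetricSpace X] (γ : ℝ → X) (ρ : ℕ → ℝ) {N : ℕ}
    (hmono : ∀ k < N, ρ k < ρ (k+1)) :
    ∀ b ≤ N, ∀ a ≤ b,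
      dist (γ (ρ a)) (γ (ρ b)) ^ 2 / (ρ b - ρ a) ≤
        ∑ k ∈ Finset.Ico a b, dist (γ (ρ k)) (γ (ρ (k+1))) ^ 2 / (ρ (k+1) - ρ k) := by
  intro b
  induction b with
  | zero => intro _ a ha; interval_cases a; simp
  | succ b ih =>
    intro hbN a hab
    rcases Nat.lt_succ_iff_lt_or_eq.mp (Nat.lt_succ_of_le hab) with hab' | rfl
    swap
    · simp
    have hab2 : a ≤ b := by omega
    rcases eq_or_lt_of_le hab2 with rfl | halt
    · rw [show Finset.Ico a (a+1) = {a} by rw [Finset.Ico_add_one_right_eq_Icc, Finset.Icc_self]]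
      simp
    · have hs : 0 < ρ b - ρ a := sub_pos.2 (rho_strict ρ hmono b (by omega) a halt)
      have ht : 0 < ρ (b+1) - ρ b := sub_pos.2 (hmono b (by omega))
      calc dist (γ (ρ a)) (γ (ρ (b+1)))^2 / (ρ (b+1) - ρ a)
          ≤ (dist (γ (ρ a)) (γ (ρ b)) + dist (γ (ρ b)) (γ (ρ (b+1))))^2
              / ((ρ b - ρ a) + (ρ (b+1) - ρ b)) := by
            rw [show (ρ b - ρ a) + (ρ (b+1) - ρ b) = ρ (b+1) - ρ a by ring]
            gcongr
            · linarith
            · exact dist_triangle _ _ _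
        _ ≤ dist (γ (ρ a)) (γ (ρ b))^2 / (ρ b - ρ a)
              + dist (γ (ρ b)) (γ (ρ (b+1)))^2 / (ρ (b+1) - ρ b) := titu hs ht
        _ ≤ _ := by
            rw [Finset.sum_Ico_succ_top hab2]
            gcongr
            exact ih (by omega) a hab2

lemma tele (f : ℕ → ℝ) (j : ℕ → ℕ) (hj : Monotone j) :
    ∀ n, ∑ i ∈ Finset.range n, ∑ k ∈ Finset.Ico (j i) (j (i+1)), f k
        = ∑ k ∈ Finset.Ico (j 0) (j n), f k := by
  intro n; induction n with
  | zero => simp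
  | succ n ih =>
    rw [Finset.sum_range_succ, ih,
      Finset.sum_Ico_consecutive _ (hj (Nat.zero_le n)) (hj (Nat.le_succ n))]

lemma energySum_continuousOn {X : Type*} [MetricSpace X] (γ : ℝ → X)
    (hγ : ContinuousOn γ (Icc (0 : ℝ) 1)) (n : ℕ) :
    ContinuousOn (fun t : Fin (n+2) → ℝ => energySum γ t)
      {t : Fin (n+2) → ℝ | (∀ i, t i ∈ Icc (0:ℝ) 1) ∧
        ∀ k : Fin (n+1), t k.castSucc < t k.succ} := by
  have key : ∀ i : Fin (n+2), ContinuousOn (fun t : Fin (n+2) → ℝ => γ (t i))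
      {t : Fin (n+2) → ℝ | (∀ i, t i ∈ Icc (0:ℝ) 1) ∧
        ∀ k : Fin (n+1), t k.castSucc < t k.succ} := by
    intro i
    apply hγ.comp (continuous_apply i).continuousOn
    intro t ht
    exact ht.1 i
  unfold energySum
  apply continuousOn_finset_sum
  intro k _
  apply ContinuousOn.div
  · exact (continuous_dist.comp_continuousOn ((key k.castSucc).prodMk (key k.succ))).pow 2
  · exact ((continuous_apply k.succ).sub (continuous_apply k.castSucc)).continuousOn
  · intro t ht; exact sub_ne_zero.2 (ne_of_gt (ht.2 k))

/-- For a continuous curve of finite energy, the energy sums along partitions of small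
mesh approximate the energy: for every `ε > 0` there is `δ > 0` such that every
partition of mesh `≤ δ` has energy sum `≥ E(γ) - ε`. -/
theorem stmt_7 {X : Type*} [MetricSpace X] (γ : ℝ → X)
    (hγ : ContinuousOn γ (Icc (0 : ℝ) 1)) (hE : energy γ ≠ ⊤) :
    ∀ ε > (0 : ℝ), ∃ δ > (0 : ℝ), ∀ (m : ℕ) (r : Fin (m + 2) → ℝ),
      IsPartition r → (∀ k : Fin (m + 1), r k.succ - r k.castSucc ≤ δ) →
      (energy γ).toReal - ε ≤ energySum γ r := by
  intro ε hε
  by_cases htriv : (energy γ).toReal ≤ ε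
  · refine ⟨1, one_pos, fun m r hr _ => ?_⟩
    have h0 : 0 ≤ energySum γ r := by
      apply Finset.sum_nonneg
      intro k _
      have := hr.1 (Fin.castSucc_lt_succ (i := k))
      exact div_nonneg (by positivity) (by linarith)
    linarith
  push_neg at htriv
  -- choose a near-optimal partition s
  have hlt : ENNReal.ofReal ((energy γ).toReal - ε/2) < energy γ := by
    conv_rhs => rw [← ENNReal.ofReal_toReal hE]
    exact (ENNReal.ofReal_lt_ofReal_iff (by linarith)).mpr (by linarith)
  rw [energy, lt_iSup_iff] at hlt
  obtain ⟨n, hlt⟩ := hlt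
  rw [lt_iSup_iff] at hlt
  obtain ⟨s, hlt⟩ := hlt
  rw [lt_iSup_iff] at hlt
  obtain ⟨hsP, hlt⟩ := hlt
  have hsval : (energy γ).toReal - ε/2 < energySum γ s :=
    (ENNReal.ofReal_lt_ofReal_iff_of_nonneg (by linarith)).mp hlt
  -- continuity of the energy sum at s
  have hsU : s ∈ {t : Fin (n+2) → ℝ | (∀ i, t i ∈ Icc (0:ℝ) 1) ∧
      ∀ k : Fin (n+1), t k.castSucc < t k.succ} := by
    refine ⟨fun i => ⟨?_, ?_⟩, fun k => hsP.1 (Fin.castSucc_lt_succ (i := k))⟩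
    · rw [← hsP.2.1]; exact hsP.1.monotone (Fin.zero_le i)
    · rw [← hsP.2.2]; exact hsP.1.monotone (Fin.le_last i)
  have hcont := (energySum_continuousOn γ hγ n) s hsU
  rw [Metric.continuousWithinAt_iff] at hcont
  obtain ⟨δ₁, hδ₁, hδ₁'⟩ := hcont (ε/2) (by linarith)
  -- minimal gap of s
  set g : ℝ := Finset.univ.inf' Finset.univ_nonempty
    (fun k : Fin (n+1) => s k.succ - s k.castSucc) with hg_def
  have hg : 0 < g := by
    rw [hg_def, Finset.lt_inf'_iff]
    intro k _
    exact sub_pos.2 (hsP.1 (Fin.castSucc_lt_succ (i := k)))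
  have hgle : ∀ k : Fin (n+1), g ≤ s k.succ - s k.castSucc := fun k =>
    Finset.inf'_le _ (Finset.mem_univ k)
  refine ⟨min δ₁ g / 2, by positivity, ?_⟩
  set δ := min δ₁ g / 2 with hδ_def
  have hδδ₁ : δ < δ₁ := by
    rw [hδ_def]
    calc min δ₁ g / 2 ≤ δ₁ / 2 := by gcongr; exact min_le_left _ _
      _ < δ₁ := by linarith
  have hδg : δ < g := by
    rw [hδ_def]
    calc min δ₁ g / 2 ≤ g / 2 := by gcongr; exact min_le_right _ _
      _ < g := by linarith
  have hδ0 : 0 < δ := by positivity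
  intro m r hrP hmesh
  -- natural-number versions of the partitions
  set ρ : ℕ → ℝ := fun k => r ⟨min k (m+1), by omega⟩ with hρ_def
  set σ : ℕ → ℝ := fun i => s ⟨min i (n+1), by omega⟩ with hσ_def
  have hρ : ∀ k (hk : k ≤ m+1), ρ k = r ⟨k, by omega⟩ := by
    intro k hk
    simp only [hρ_def]
    congr 1
    exact Fin.ext (by simp [min_eq_left hk])
  have hσ : ∀ i (hi : i ≤ n+1), σ i = s ⟨i, by omega⟩ := by
    intro i hi
    simp only [hσ_def]
    congr 1
    exact Fin.ext (by simp [min_eq_left hi])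
  have hρmono : ∀ k < m+1, ρ k < ρ (k+1) := by
    intro k hk
    rw [hρ k (by omega), hρ (k+1) (by omega)]
    exact hrP.1 (by simp [Fin.mk_lt_mk])
  have hρ0 : ρ 0 = 0 := by rw [hρ 0 (by omega)]; exact hrP.2.1
  have hρtop : ρ (m+1) = 1 := by
    rw [hρ (m+1) (by omega)]
    exact hrP.2.2
  have hρrange : ∀ k, ρ k ∈ Icc (0:ℝ) 1 := by
    intro k
    constructor
    · rw [← hrP.2.1]; exact hrP.1.monotone (Fin.zero_le _)
    · rw [← hrP.2.2]; exact hrP.1.monotone (Fin.le_last _)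
  have hρmesh : ∀ k < m+1, ρ (k+1) - ρ k ≤ δ := by
    intro k hk
    rw [hρ k (by omega), hρ (k+1) (by omega)]
    have := hmesh ⟨k, hk⟩
    simpa [Fin.succ_mk, Fin.castSucc_mk] using this
  have hσmono : ∀ i < n+1, σ i < σ (i+1) := by
    intro i hi
    rw [hσ i (by omega), hσ (i+1) (by omega)]
    exact hsP.1 (by simp [Fin.mk_lt_mk])
  have hσ0 : σ 0 = 0 := by rw [hσ 0 (by omega)]; exact hsP.2.1
  have hσtop : σ (n+1) = 1 := by rw [hσ (n+1) (by omega)]; exact hsP.2.2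
  have hσrange : ∀ i, σ i ∈ Icc (0:ℝ) 1 := by
    intro i
    constructor
    · rw [← hsP.2.1]; exact hsP.1.monotone (Fin.zero_le _)
    · rw [← hsP.2.2]; exact hsP.1.monotone (Fin.le_last _)
  have hσgap : ∀ i < n+1, g ≤ σ (i+1) - σ i := by
    intro i hi
    rw [hσ i (by omega), hσ (i+1) (by omega)]
    have := hgle ⟨i, hi⟩
    simpa [Fin.succ_mk, Fin.castSucc_mk] using this
  -- greatest partition point of r below σ i
  classical
  set K : ℕ → ℕ := fun i => Nat.findGreatest (fun k => ρ k ≤ σ i) (m+1) with hK_def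
  have hK1 : ∀ i, ρ (K i) ≤ σ i := by
    intro i
    exact Nat.findGreatest_spec (P := fun k => ρ k ≤ σ i) (Nat.zero_le _)
      (show ρ 0 ≤ σ i by rw [hρ0]; exact (hσrange i).1)
  have hKle : ∀ i, K i ≤ m+1 := fun i => Nat.findGreatest_le _
  have hKlt : ∀ i < n+1, 1 ≤ i → K i < m+1 := by
    intro i hi hi1
    rcases eq_or_lt_of_le (hKle i) with heq | h
    · exfalso
      have h1 : ρ (K i) ≤ σ i := hK1 i
      rw [heq, hρtop] at h1
      have h2 : σ i < σ (n+1) := by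
        rcases eq_or_lt_of_le (Nat.lt_succ_iff.mp hi) with rfl | h'
        · exact hσmono i hi
        · exact (hσmono i (by omega)).trans_le
            (rho_mono σ hσmono (n+1) le_rfl (i+1) (by omega))
      rw [hσtop] at h2
      linarith
    · exact h
  have hK2 : ∀ i < n+1, 1 ≤ i → σ i - δ < ρ (K i) := by
    intro i hi hi1
    have hgr : ¬ ρ (K i + 1) ≤ σ i :=
      Nat.findGreatest_is_greatest (P := fun k => ρ k ≤ σ i) (Nat.lt_succ_self _)
        (hKlt i hi hi1)
    push_neg at hgr
    have := hρmesh (K i) (hKlt i hi hi1)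
    linarith
  -- K is strictly increasing on [1, n]
  have hKstrict : ∀ i, 1 ≤ i → i < n → K i < K (i+1) := by
    intro i hi1 hin
    have h1 : ρ (K i) ≤ σ i := hK1 i
    have h2 : σ (i+1) - δ < ρ (K (i+1)) := hK2 (i+1) (by omega) (by omega)
    have h3 : g ≤ σ (i+1) - σ i := hσgap i (by omega)
    have : ρ (K i) < ρ (K (i+1)) := by linarith
    by_contra hcon
    push_neg at hcon
    exact absurd (rho_mono ρ hρmono (K i) (hKle i) (K (i+1)) hcon) (by linarith)
  have hK1pos : 1 ≤ n → 1 ≤ K 1 := by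
    intro hn
    have h2 : σ 1 - δ < ρ (K 1) := hK2 1 (by omega) le_rfl
    have h3 : g ≤ σ 1 - σ 0 := hσgap 0 (by omega)
    rw [hσ0] at h3
    have : ρ 0 < ρ (K 1) := by rw [hρ0]; linarith
    by_contra hcon
    push_neg at hcon
    have h0 : K 1 = 0 := by omega
    rw [h0] at this
    exact lt_irrefl _ this
  -- the index map j
  set j : ℕ → ℕ := fun i => if i = 0 then 0 else if i ≤ n then K i else m+1 with hj_def
  have hj0 : j 0 = 0 := by simp [hj_def]
  have hjtop : ∀ i, n+1 ≤ i → j i = m+1 := by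
    intro i hi
    simp only [hj_def]
    rw [if_neg (by omega), if_neg (by omega)]
  have hjle : ∀ i, j i ≤ m+1 := by
    intro i
    simp only [hj_def]
    by_cases h1 : i = 0
    · rw [if_pos h1]; omega
    · rw [if_neg h1]
      by_cases h2 : i ≤ n
      · rw [if_pos h2]; exact hKle _
      · rw [if_neg h2]
  have hjstrict : ∀ i ≤ n, j i < j (i+1) := by
    intro i hi
    rcases Nat.eq_zero_or_pos i with rfl | hipos
    · rw [hj0]
      rcases Nat.eq_zero_or_pos n with rfl | hn
      · rw [hjtop 1 le_rfl]; omega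
      · simp only [hj_def]
        rw [if_neg (by omega), if_pos (by omega)]
        exact hK1pos hn
    · rcases eq_or_lt_of_le hi with rfl | hin
      · simp only [hj_def]
        rw [if_neg (by omega), if_pos le_rfl, if_neg (by omega), if_neg (by omega)]
        exact hKlt i (by omega) hipos
      · simp only [hj_def]
        rw [if_neg (by omega), if_pos (by omega), if_neg (by omega), if_pos (by omega)]
        exact hKstrict i hipos (by omega)
  have hjmono : Monotone j := by
    apply monotone_nat_of_le_succ
    intro i
    rcases le_or_gt i n with h | h
    · exact (hjstrict i h).le
    · rw [hjtop i (by omega), hjtop (i+1) (by omega)]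
  -- the sub-partition s'
  set s' : Fin (n+2) → ℝ := fun i => ρ (j i.val) with hs'_def
  have hs'U : s' ∈ {t : Fin (n+2) → ℝ | (∀ i, t i ∈ Icc (0:ℝ) 1) ∧
      ∀ k : Fin (n+1), t k.castSucc < t k.succ} := by
    constructor
    · intro i; exact hρrange _
    · intro k
      simp only [hs'_def, Fin.coe_castSucc, Fin.val_succ]
      exact rho_strict ρ hρmono (j (k.val+1)) (hjle _) (j k.val)
        (hjstrict k.val (by omega))
  have hdist : dist s' s < δ₁ := by
    rw [dist_pi_lt_iff hδ₁]
    intro i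
    rcases Nat.eq_zero_or_pos i.val with h0 | hpos
    · have hi0 : i = 0 := Fin.ext h0
      rw [hi0]
      have : s' 0 = s 0 := by
        show ρ (j ((0 : Fin (n+2)).val)) = s 0
        rw [show ((0 : Fin (n+2)).val) = 0 from rfl, hj0, hρ0, hsP.2.1]
      rw [this, dist_self]; exact hδ₁
    · rcases eq_or_lt_of_le (Nat.lt_succ_iff.mp i.isLt) with htop | hint
      · have : s' i = s i := by
          show ρ (j i.val) = s i
          rw [hjtop i.val (by omega), hρtop]
          have : i = Fin.last (n+1) := Fin.ext (by simpa using htop)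
          rw [this, hsP.2.2]
        rw [this, dist_self]; exact hδ₁
      · have hival : 1 ≤ i.val ∧ i.val < n+1 := ⟨hpos, hint⟩
        have hj_eq : j i.val = K i.val := by
          simp only [hj_def]
          rw [if_neg (by omega), if_pos (by omega)]
        have h1 : ρ (K i.val) ≤ σ i.val := hK1 _
        have h2 : σ i.val - δ < ρ (K i.val) := hK2 i.val hint hpos
        have hsi : s i = σ i.val := by
          rw [hσ i.val (by omega)]
        have hs'i : s' i = ρ (K i.val) := by
          show ρ (j i.val) = ρ (K i.val)
          rw [hj_eq]
        rw [Real.dist_eq, hs'i, hsi, abs_lt]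
        constructor <;> linarith
  have hclose := hδ₁' hs'U hdist
  rw [Real.dist_eq, abs_lt] at hclose
  -- refinement inequality : energySum γ s' ≤ energySum γ r
  set e : ℕ → ℝ := fun k => dist (γ (ρ k)) (γ (ρ (k+1)))^2 / (ρ (k+1) - ρ k) with he_def
  have hr_sum : energySum γ r = ∑ k ∈ Finset.range (m+1), e k := by
    rw [energySum, ← Fin.sum_univ_eq_sum_range (fun k => e k) (m+1)]
    apply Finset.sum_congr rfl
    intro k _
    simp only [he_def]
    rw [hρ k.val (by omega), hρ (k.val+1) (by omega)]
    have hA : (⟨k.val, by omega⟩ : Fin (m+2)) = k.castSucc := Fin.ext (by simp)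
    have hB : (⟨k.val+1, by omega⟩ : Fin (m+2)) = k.succ := Fin.ext (by simp)
    rw [hA, hB]
  have hs'_sum : energySum γ s' =
      ∑ i ∈ Finset.range (n+1),
        dist (γ (ρ (j i))) (γ (ρ (j (i+1))))^2 / (ρ (j (i+1)) - ρ (j i)) := by
    rw [energySum, ← Fin.sum_univ_eq_sum_range
      (fun i => dist (γ (ρ (j i))) (γ (ρ (j (i+1))))^2 / (ρ (j (i+1)) - ρ (j i))) (n+1)]
    apply Finset.sum_congr rfl
    intro k _
    simp only [hs'_def, Fin.coe_castSucc, Fin.val_succ]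
  have hrefine : energySum γ s' ≤ energySum γ r := by
    rw [hr_sum, hs'_sum]
    calc ∑ i ∈ Finset.range (n+1),
          dist (γ (ρ (j i))) (γ (ρ (j (i+1))))^2 / (ρ (j (i+1)) - ρ (j i))
        ≤ ∑ i ∈ Finset.range (n+1), ∑ k ∈ Finset.Ico (j i) (j (i+1)), e k := by
          apply Finset.sum_le_sum
          intro i _
          exact block γ ρ hρmono (j (i+1)) (hjle _) (j i) (hjmono (Nat.le_succ i))
      _ = ∑ k ∈ Finset.Ico (j 0) (j (n+1)), e k := tele e j hjmono (n+1)
      _ = ∑ k ∈ Finset.range (m+1), e k := by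
          rw [hj0, hjtop (n+1) le_rfl, Finset.range_eq_Ico]
  linarith
end

section
/- Let γ : [0,1] → X be a continuous curve in a metric space with finite energy E(γ). Then for every ε ∈ (0,1) and every h ∈ (0, ε], ∫_0^{1−ε} d(γ(t+h), γ(t))²/h² dt ≤ E(γ). -/
open Set MeasureTheory Filter
open scoped ENNReal

lemma partialSum_le {X : Type*} [MetricSpace X] (γ : ℝ → X) (hE : energy γ ≠ ⊤)
    {m : ℕ} (s : Fin (m + 1) → ℝ) (hs : StrictMono s) (h0 : 0 < s 0)
    (h1 : s (Fin.last m) < 1) :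
    ∑ k : Fin m, dist (γ (s k.castSucc)) (γ (s k.succ)) ^ 2 / (s k.succ - s k.castSucc)
      ≤ (energy γ).toReal := by
  set r : Fin (m + 1 + 2) → ℝ := fun i =>
    if (i : ℕ) = 0 then 0 else if hi : (i : ℕ) < m + 2 then s ⟨(i : ℕ) - 1, by omega⟩ else 1
    with hrdef
  have hrval0 : ∀ (ha : 0 < m + 3), r ⟨0, ha⟩ = 0 := by intro ha; simp [hrdef]
  have hrvaltop : ∀ (ha : m + 2 < m + 3), r ⟨m + 2, ha⟩ = 1 := by
    intro ha
    simp only [hrdef]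
    rw [if_neg (by omega), dif_neg (by omega)]
  have hrmid : ∀ (j : ℕ) (hj : j < m + 1), r ⟨j + 1, by omega⟩ = s ⟨j, hj⟩ := by
    intro j hj
    simp only [hrdef]
    rw [if_neg (by omega), dif_pos (by omega)]
    exact congrArg s (Fin.mk_eq_mk.mpr (by omega))
  have hr0 : r 0 = 0 := hrval0 _
  have hrlast : r (Fin.last (m + 2)) = 1 := hrvaltop _
  have mono : StrictMono r := by
    rintro ⟨i, hi⟩ ⟨j, hj⟩ hij
    simp only [Fin.mk_lt_mk] at hij
    rcases Nat.eq_zero_or_pos i with rfl | hi0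
    · by_cases hjt : j = m + 2
      · subst hjt; rw [hrval0, hrvaltop]; exact zero_lt_one
      · rw [hrval0,
          show (⟨j, hj⟩ : Fin (m + 1 + 2)) = ⟨(j - 1) + 1, by omega⟩ from Fin.mk_eq_mk.mpr (by omega),
          hrmid (j - 1) (by omega)]
        exact h0.trans_le (hs.monotone (Fin.zero_le _))
    · by_cases hjt : j = m + 2
      · subst hjt
        rw [show (⟨i, hi⟩ : Fin (m + 1 + 2)) = ⟨(i - 1) + 1, by omega⟩ from Fin.mk_eq_mk.mpr (by omega),
          hrmid (i - 1) (by omega), hrvaltop]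
        exact lt_of_le_of_lt (hs.monotone (Fin.le_last _)) h1
      · rw [show (⟨i, hi⟩ : Fin (m + 1 + 2)) = ⟨(i - 1) + 1, by omega⟩ from Fin.mk_eq_mk.mpr (by omega),
          hrmid (i - 1) (by omega),
          show (⟨j, hj⟩ : Fin (m + 1 + 2)) = ⟨(j - 1) + 1, by omega⟩ from Fin.mk_eq_mk.mpr (by omega),
          hrmid (j - 1) (by omega)]
        exact hs (Fin.mk_lt_mk.mpr (by omega))
  have hpart : IsPartition r := ⟨mono, hr0, hrlast⟩
  set T : Fin (m + 2) → ℝ := fun k =>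
    dist (γ (r k.castSucc)) (γ (r k.succ)) ^ 2 / (r k.succ - r k.castSucc) with hT
  have hT0 : ∀ k, 0 ≤ T k := fun k =>
    div_nonneg (by positivity) (sub_nonneg.2 (mono (Fin.castSucc_lt_succ : k.castSucc < k.succ)).le)
  set emb : Fin m ↪ Fin (m + 2) :=
    ⟨fun k => ⟨(k : ℕ) + 1, by omega⟩, by
      intro a b hab
      simpa [Fin.ext_iff] using hab⟩ with hemb
  have key : ∀ k : Fin m,
      dist (γ (s k.castSucc)) (γ (s k.succ)) ^ 2 / (s k.succ - s k.castSucc) = T (emb k) := by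
    intro k
    have e1 : r (emb k).castSucc = s k.castSucc := by
      rw [show ((emb k).castSucc : Fin (m + 1 + 2)) = ⟨(k : ℕ) + 1, by omega⟩ from Fin.ext rfl,
        hrmid (k : ℕ) (by omega)]
      exact congrArg s (Fin.ext rfl)
    have e2 : r (emb k).succ = s k.succ := by
      rw [show ((emb k).succ : Fin (m + 1 + 2)) = ⟨(k : ℕ) + 1 + 1, by omega⟩ from Fin.ext rfl,
        hrmid ((k : ℕ) + 1) (by omega)]
      exact congrArg s (Fin.ext rfl)
    simp only [hT, e1, e2]
  have hsum : ∑ k : Fin m, dist (γ (s k.castSucc)) (γ (s k.succ)) ^ 2 / (s k.succ - s k.castSucc)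
      ≤ energySum γ r := by
    calc ∑ k : Fin m, dist (γ (s k.castSucc)) (γ (s k.succ)) ^ 2 / (s k.succ - s k.castSucc)
        = ∑ k : Fin m, T (emb k) := Finset.sum_congr rfl fun k _ => key k
      _ = ∑ k ∈ Finset.univ.map emb, T k := (Finset.sum_map _ _ _).symm
      _ ≤ ∑ k : Fin (m + 2), T k :=
          Finset.sum_le_sum_of_subset_of_nonneg (Finset.subset_univ _) fun i _ _ => hT0 i
      _ = energySum γ r := rfl
  have hnn : 0 ≤ energySum γ r := Finset.sum_nonneg fun k _ => hT0 k
  have hle : ENNReal.ofReal (energySum γ r) ≤ energy γ := by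
    refine le_trans ?_ (le_iSup _ (m + 1))
    refine le_trans ?_ (le_iSup _ r)
    exact le_iSup (fun _ : IsPartition r => ENNReal.ofReal (energySum γ r)) hpart
  calc ∑ k : Fin m, dist (γ (s k.castSucc)) (γ (s k.succ)) ^ 2 / (s k.succ - s k.castSucc)
      ≤ energySum γ r := hsum
    _ = (ENNReal.ofReal (energySum γ r)).toReal := (ENNReal.toReal_ofReal hnn).symm
    _ ≤ (energy γ).toReal := ENNReal.toReal_mono hE hle

lemma sumF_le {X : Type*} [MetricSpace X] (γ : ℝ → X) (hE : energy γ ≠ ⊤)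
    {h : ℝ} (hh : 0 < h) (N : ℕ) (t : ℝ) (ht : 0 < t) (htN : t + N * h < 1) :
    ∑ i ∈ Finset.range N, dist (γ (t + i * h + h)) (γ (t + i * h)) ^ 2
      ≤ h * (energy γ).toReal := by
  set s : Fin (N + 1) → ℝ := fun i => t + (i : ℕ) * h with hsdef
  have hs : StrictMono s := by
    intro i j hij
    have : ((i : ℕ) : ℝ) < ((j : ℕ) : ℝ) := by exact_mod_cast hij
    simp only [hsdef]
    nlinarith
  have h0 : 0 < s 0 := by simpa [hsdef] using ht
  have h1 : s (Fin.last N) < 1 := by simpa [hsdef, Fin.last] using htN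
  have key := partialSum_le γ hE s hs h0 h1
  have heq : ∑ k : Fin N, dist (γ (s k.castSucc)) (γ (s k.succ)) ^ 2 / (s k.succ - s k.castSucc)
      = (∑ i ∈ Finset.range N, dist (γ (t + i * h + h)) (γ (t + i * h)) ^ 2) / h := by
    rw [Finset.sum_div, ← Fin.sum_univ_eq_sum_range
      (fun i : ℕ => dist (γ (t + i * h + h)) (γ (t + i * h)) ^ 2 / h) N]
    refine Finset.sum_congr rfl fun k _ => ?_
    have e1 : s k.castSucc = t + (k : ℕ) * h := by simp [hsdef]
    have e2 : s k.succ = t + (k : ℕ) * h + h := by simp [hsdef]; ring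
    rw [e1, e2, dist_comm]
    congr 1
    ring
  rw [heq, div_le_iff₀ hh] at key
  linarith [key]

lemma integral_le_of_forall_Ioo {f : ℝ → ℝ} {a b C : ℝ} (hab : a ≤ b)
    (hf : IntervalIntegrable f volume a b) (hC : ∀ t ∈ Ioo a b, f t ≤ C) :
    ∫ t in a..b, f t ≤ (b - a) * C := by
  rw [intervalIntegral.integral_of_le hab, MeasureTheory.integral_Ioc_eq_integral_Ioo]
  have h1 : IntegrableOn f (Ioo a b) := (hf.1).mono_set Ioo_subset_Ioc_self
  calc ∫ t in Ioo a b, f t ≤ ∫ _ in Ioo a b, C :=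
        setIntegral_mono_on h1
          (integrableOn_const measure_Ioo_lt_top.ne) measurableSet_Ioo hC
    _ = (b - a) * C := by
        rw [setIntegral_const, Real.volume_real_Ioo_of_le hab, smul_eq_mul]

set_option maxHeartbeats 1000000 in
/-- For a continuous curve of finite energy, for every `ε ∈ (0,1)` and `h ∈ (0, ε]`,
`∫_0^{1-ε} d(γ(t+h), γ(t))²/h² dt ≤ E(γ)`. -/
theorem stmt_9 {X : Type*} [MetricSpace X] (γ : ℝ → X)
    (hγ : ContinuousOn γ (Icc (0 : ℝ) 1)) (hE : energy γ ≠ ⊤) :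
    ∀ ε : ℝ, 0 < ε → ε < 1 → ∀ h : ℝ, 0 < h → h ≤ ε →
      ∫ t in (0 : ℝ)..(1 - ε), dist (γ (t + h)) (γ t) ^ 2 / h ^ 2 ≤ (energy γ).toReal := by
  intro ε hε hε1 h hh hhε
  set E : ℝ := (energy γ).toReal with hEdef
  set L : ℝ := 1 - ε with hLdef
  have hL0 : 0 < L := by simp only [hLdef]; linarith
  have hLh : L ≤ 1 - h := by simp only [hLdef]; linarith
  set F : ℝ → ℝ := fun s => dist (γ (s + h)) (γ s) ^ 2 with hFdef
  have hFc : ContinuousOn F (Icc 0 (1 - h)) := by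
    have h1 : ContinuousOn (fun s : ℝ => γ (s + h)) (Icc 0 (1 - h)) :=
      hγ.comp (continuous_add_right h).continuousOn
        (fun x hx => ⟨by linarith [hx.1], by linarith [hx.2]⟩)
    have h2 : ContinuousOn (fun s : ℝ => γ s) (Icc 0 (1 - h)) :=
      hγ.mono (fun x hx => ⟨hx.1, by linarith [hx.2, hh.le]⟩)
    exact (continuous_dist.comp_continuousOn (h1.prodMk h2)).pow 2
  -- shifted continuity
  have hshift : ∀ (i : ℕ) (b : ℝ), b + i * h ≤ 1 - h →
      ContinuousOn (fun t => F (t + i * h)) (Icc 0 b) := by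
    intro i b hb
    refine hFc.comp (continuous_add_right _).continuousOn fun x hx => ?_
    have hi0 : (0 : ℝ) ≤ (i : ℝ) * h := by positivity
    exact ⟨by linarith [hx.1], by linarith [hx.2]⟩
  set n : ℕ := ⌊L / h⌋₊ with hn
  have hnh : (n : ℝ) * h ≤ L := by
    have h1 : (n : ℝ) ≤ L / h := Nat.floor_le (le_of_lt (div_pos hL0 hh))
    calc (n : ℝ) * h ≤ (L / h) * h := by nlinarith
      _ = L := by field_simp
  have hnh2 : L < ((n : ℝ) + 1) * h := by
    have h1 : L / h < (n : ℝ) + 1 := Nat.lt_floor_add_one _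
    calc L = (L / h) * h := by field_simp
      _ < ((n : ℝ) + 1) * h := by nlinarith
  set c : ℝ := L - n * h with hc
  have hc0 : 0 ≤ c := by simp only [hc]; linarith
  have hch : c < h := by simp only [hc]; nlinarith
  set G : ℕ → ℝ → ℝ := fun N t => ∑ i ∈ Finset.range N, F (t + i * h) with hGdef
  have hGc : ∀ (N : ℕ) (b : ℝ), (∀ i < N, b + i * h ≤ 1 - h) →
      ContinuousOn (G N) (Icc 0 b) := by
    intro N b hb
    exact continuousOn_finset_sum _ fun i hi => hshift i b (hb i (Finset.mem_range.mp hi))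
  -- partition points
  set a : ℕ → ℝ := fun i => min ((i : ℝ) * h) L with hadef
  have ha_le : ∀ i j : ℕ, i ≤ j → a i ≤ a j := by
    intro i j hij
    refine min_le_min ?_ le_rfl
    have : (i : ℝ) ≤ (j : ℝ) := by exact_mod_cast hij
    nlinarith
  have ha0 : a 0 = 0 := by simp [hadef, hL0.le]
  have han1 : a (n + 1) = L := by
    simp only [hadef]
    rw [min_eq_right]
    push_cast
    linarith
  have hamem : ∀ i, a i ∈ Icc (0:ℝ) L := fun i =>
    ⟨le_min (by positivity) hL0.le, min_le_right _ _⟩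
  have hint : ∀ i, IntervalIntegrable F volume (a i) (a (i + 1)) := by
    intro i
    apply ContinuousOn.intervalIntegrable
    apply hFc.mono
    rw [uIcc_of_le (ha_le i (i+1) (by omega))]
    intro x hx
    exact ⟨le_trans (hamem i).1 hx.1, le_trans hx.2 (le_trans (hamem (i+1)).2 hLh)⟩
  have step1 : ∫ s in (0:ℝ)..L, F s = ∑ i ∈ Finset.range (n + 1), ∫ s in a i..a (i + 1), F s := by
    rw [intervalIntegral.sum_integral_adjacent_intervals (fun i _ => hint i), ha0, han1]
  have ha_mid : ∀ i : ℕ, i ≤ n → a i = (i : ℝ) * h := by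
    intro i hi
    simp only [hadef]
    rw [min_eq_left]
    calc (i : ℝ) * h ≤ (n : ℝ) * h := by
          have : (i : ℝ) ≤ (n : ℝ) := by exact_mod_cast hi
          nlinarith
      _ ≤ L := hnh
  have step2 : ∀ i : ℕ, i < n → ∫ s in a i..a (i + 1), F s = ∫ t in (0:ℝ)..h, F (t + i * h) := by
    intro i hi
    rw [intervalIntegral.integral_comp_add_right F ((i : ℝ) * h), ha_mid i hi.le,
      ha_mid (i + 1) hi, zero_add]
    congr 1
    push_cast
    ring
  have step2' : ∫ s in a n..a (n + 1), F s = ∫ t in (0:ℝ)..c, F (t + n * h) := by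
    rw [intervalIntegral.integral_comp_add_right F ((n : ℝ) * h), ha_mid n le_rfl, han1, zero_add]
    congr 1
    simp only [hc]; ring
  -- integrability facts
  have hGn_cont : ContinuousOn (G n) (Icc 0 h) := by
    refine hGc n h fun i hi => ?_
    have : ((i : ℝ) + 1) * h ≤ (n : ℝ) * h := by
      have : ((i : ℝ) + 1) ≤ (n : ℝ) := by exact_mod_cast hi
      nlinarith
    nlinarith
  have hGn1_cont : ContinuousOn (G (n + 1)) (Icc 0 c) := by
    refine hGc (n + 1) c fun i hi => ?_
    have h1 : (i : ℝ) * h ≤ (n : ℝ) * h := by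
      have : (i : ℝ) ≤ (n : ℝ) := by exact_mod_cast Nat.lt_succ_iff.mp hi
      nlinarith
    simp only [hc] at *
    linarith
  have hFn_cont : ContinuousOn (fun t => F (t + n * h)) (Icc 0 c) := by
    refine hshift n c ?_
    simp only [hc]; linarith
  have hGn_int1 : IntervalIntegrable (G n) volume 0 c := by
    apply ContinuousOn.intervalIntegrable
    rw [uIcc_of_le hc0]
    exact hGn_cont.mono (Icc_subset_Icc le_rfl hch.le)
  have hGn_int2 : IntervalIntegrable (G n) volume c h := by
    apply ContinuousOn.intervalIntegrable
    rw [uIcc_of_le hch.le]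
    exact hGn_cont.mono (Icc_subset_Icc hc0 le_rfl)
  have hGn_int : IntervalIntegrable (G n) volume 0 h := by
    apply ContinuousOn.intervalIntegrable
    rw [uIcc_of_le hh.le]
    exact hGn_cont
  have hFn_int : IntervalIntegrable (fun t => F (t + n * h)) volume 0 c := by
    apply ContinuousOn.intervalIntegrable
    rw [uIcc_of_le hc0]
    exact hFn_cont
  have hGn1_int : IntervalIntegrable (G (n + 1)) volume 0 c := by
    apply ContinuousOn.intervalIntegrable
    rw [uIcc_of_le hc0]
    exact hGn1_cont
  have step3 : ∑ i ∈ Finset.range n, ∫ t in (0:ℝ)..h, F (t + i * h) = ∫ t in (0:ℝ)..h, G n t := by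
    rw [intervalIntegral.integral_finset_sum]
    intro i hi
    apply ContinuousOn.intervalIntegrable
    rw [uIcc_of_le hh.le]
    refine hshift i h ?_
    have : ((i : ℝ) + 1) * h ≤ (n : ℝ) * h := by
      have : ((i : ℝ) + 1) ≤ (n : ℝ) := by exact_mod_cast Finset.mem_range.mp hi
      nlinarith
    nlinarith
  have step4 : ∫ t in (0:ℝ)..h, G n t = (∫ t in (0:ℝ)..c, G n t) + ∫ t in c..h, G n t :=
    (intervalIntegral.integral_add_adjacent_intervals hGn_int1 hGn_int2).symm
  have step5 : (∫ t in (0:ℝ)..c, G n t) + (∫ t in (0:ℝ)..c, F (t + n * h))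
      = ∫ t in (0:ℝ)..c, G (n + 1) t := by
    rw [← intervalIntegral.integral_add hGn_int1 hFn_int]
    refine intervalIntegral.integral_congr fun t _ => ?_
    simp only [hGdef]
    rw [Finset.sum_range_succ]
  -- pointwise bounds
  have hE0 : 0 ≤ E := ENNReal.toReal_nonneg
  have boundA : ∫ t in c..h, G n t ≤ (h - c) * (h * E) := by
    refine integral_le_of_forall_Ioo hch.le hGn_int2 fun t ht => ?_
    refine sumF_le γ hE hh n t (lt_of_le_of_lt hc0 ht.1) ?_
    have : t + (n : ℝ) * h < h + (n : ℝ) * h := by linarith [ht.2]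
    calc t + (n : ℝ) * h < h + (n : ℝ) * h := this
      _ ≤ h + L := by linarith
      _ ≤ 1 := by simp only [hLdef]; linarith
  have boundB : ∫ t in (0:ℝ)..c, G (n + 1) t ≤ c * (h * E) := by
    have := integral_le_of_forall_Ioo hc0 hGn1_int (C := h * E) fun t ht => ?_
    · simpa using this
    · refine sumF_le γ hE hh (n + 1) t ht.1 ?_
      push_cast
      have : t + ((n : ℝ) + 1) * h < c + ((n : ℝ) + 1) * h := by linarith [ht.2]
      calc t + ((n : ℝ) + 1) * h < c + ((n : ℝ) + 1) * h := this
        _ = L + h := by simp only [hc]; ring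
        _ ≤ 1 := by simp only [hLdef]; linarith
  -- combine
  have total : ∫ s in (0:ℝ)..L, F s ≤ h ^ 2 * E := by
    calc ∫ s in (0:ℝ)..L, F s
        = ∑ i ∈ Finset.range (n + 1), ∫ s in a i..a (i + 1), F s := step1
      _ = (∑ i ∈ Finset.range n, ∫ s in a i..a (i + 1), F s) + ∫ s in a n..a (n + 1), F s :=
          Finset.sum_range_succ _ _
      _ = (∑ i ∈ Finset.range n, ∫ t in (0:ℝ)..h, F (t + i * h)) + ∫ t in (0:ℝ)..c, F (t + n * h) := by
          rw [step2']
          congr 1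
          exact Finset.sum_congr rfl fun i hi => step2 i (Finset.mem_range.mp hi)
      _ = (∫ t in (0:ℝ)..h, G n t) + ∫ t in (0:ℝ)..c, F (t + n * h) := by rw [step3]
      _ = ((∫ t in (0:ℝ)..c, G n t) + ∫ t in c..h, G n t) + ∫ t in (0:ℝ)..c, F (t + n * h) := by
          rw [step4]
      _ = (∫ t in (0:ℝ)..c, G (n + 1) t) + ∫ t in c..h, G n t := by rw [← step5]; ring
      _ ≤ c * (h * E) + (h - c) * (h * E) := add_le_add boundB boundA
      _ = h ^ 2 * E := by ring
  have goal_eq : (∫ t in (0:ℝ)..L, dist (γ (t + h)) (γ t) ^ 2 / h ^ 2)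
      = (∫ s in (0:ℝ)..L, F s) / h ^ 2 := by
    rw [← intervalIntegral.integral_div]
  rw [goal_eq, div_le_iff₀ (by positivity : (0:ℝ) < h ^ 2)]
  calc ∫ s in (0:ℝ)..L, F s ≤ h ^ 2 * E := total
    _ = E * h ^ 2 := by ring
end

section
/- Let μ = (μ_t)_{t∈[0,1]} be a curve in P₂(ℝᵈ) and Γ a probability measure on C([0,1], ℝᵈ) with time marginals μ_t. Then the action A(Γ) = ∫ E(γ) dΓ(γ) satisfies A(Γ) ≥ E(μ), where E(μ) is the energy of the curve t ↦ μ_t in the Wasserstein space (P₂(ℝᵈ), W₂). -/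
open Set MeasureTheory Filter
open scoped ENNReal

/-- `π` is a coupling of `μ` and `ν`. -/
def IsCoupling {E : Type*} [MeasurableSpace E] (π : Measure (E × E)) (μ ν : Measure E) : Prop :=
  π.map Prod.fst = μ ∧ π.map Prod.snd = ν

/-- The quadratic transport cost `∫ ‖y - x‖² dπ(x,y)` of a plan `π`. -/
noncomputable def transportCost {E : Type*} [NormedAddCommGroup E] [MeasurableSpace E]
    (π : Measure (E × E)) : ℝ≥0∞ :=
  ∫⁻ p, ENNReal.ofReal (‖p.2 - p.1‖ ^ 2) ∂π

/-- The squared 2-Wasserstein distance: infimum of the quadratic cost over all couplings. -/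
noncomputable def W2sq {E : Type*} [NormedAddCommGroup E] [MeasurableSpace E]
    (μ ν : Measure E) : ℝ≥0∞ :=
  ⨅ (π : Measure (E × E)) (_ : IsCoupling π μ ν), transportCost π

/-- The energy of a curve of measures in the Wasserstein space `(P₂, W₂)`. -/
noncomputable def energyW2 {E : Type*} [NormedAddCommGroup E] [MeasurableSpace E]
    (μ : ℝ → Measure E) : ℝ≥0∞ :=
  ⨆ (m : ℕ) (r : Fin (m + 2) → ℝ) (_ : IsPartition r),
    ∑ k : Fin (m + 1),
      W2sq (μ (r k.castSucc)) (μ (r k.succ)) / ENNReal.ofReal (r k.succ - r k.castSucc)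


/-- The action of a law `Γ` on `C([0,1], ℝᵈ)` with time marginals `μ t` dominates the
Wasserstein energy of the marginal curve: `A(Γ) = ∫ E(γ) dΓ(γ) ≥ E(μ)`. -/
theorem stmt_13 (d : ℕ) (μ : ℝ → Measure (EuclideanSpace ℝ (Fin d)))
    (hμprob : ∀ t, IsProbabilityMeasure (μ t))
    (hμ2 : ∀ t, ∫⁻ x, ENNReal.ofReal (‖x‖ ^ 2) ∂(μ t) ≠ ⊤)
    (Γ : Measure (ℝ → EuclideanSpace ℝ (Fin d))) [IsProbabilityMeasure Γ]
    (hcont : ∀ᵐ γ ∂Γ, ContinuousOn γ (Icc (0 : ℝ) 1))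
    (hmarg : ∀ t ∈ Icc (0 : ℝ) 1, Γ.map (fun γ => γ t) = μ t) :
    energyW2 μ ≤ ∫⁻ γ, energy γ ∂Γ := by
  rw [energyW2]
  refine iSup_le fun m => iSup_le fun r => iSup_le fun hr => ?_
  have hmem : ∀ k : Fin (m + 2), r k ∈ Icc (0 : ℝ) 1 := by
    intro k
    constructor
    · rw [← hr.2.1]; exact hr.1.monotone (Fin.zero_le k)
    · rw [← hr.2.2]; exact hr.1.monotone (Fin.le_last k)
  -- integrands and their measurability
  set F : Fin (m + 1) → (ℝ → EuclideanSpace ℝ (Fin d)) → ℝ≥0∞ :=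
    fun k γ => ENNReal.ofReal
      (dist (γ (r k.castSucc)) (γ (r k.succ)) ^ 2 / (r k.succ - r k.castSucc)) with hF
  have hFmeas : ∀ k, Measurable (F k) := by
    intro k
    apply ENNReal.measurable_ofReal.comp
    exact ((((measurable_pi_apply (r k.castSucc)).dist
      (measurable_pi_apply (r k.succ))).pow_const 2).div_const _)
  have key : ∀ k : Fin (m + 1),
      W2sq (μ (r k.castSucc)) (μ (r k.succ)) / ENNReal.ofReal (r k.succ - r k.castSucc)
        ≤ ∫⁻ γ, F k γ ∂Γ := by
    intro k
    have hab : r k.castSucc < r k.succ := hr.1 (Fin.castSucc_lt_succ : k.castSucc < k.succ)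
    have hΔ : (0 : ℝ) < r k.succ - r k.castSucc := sub_pos.mpr hab
    have hmeas : Measurable
        (fun γ : ℝ → EuclideanSpace ℝ (Fin d) => (γ (r k.castSucc), γ (r k.succ))) :=
      (measurable_pi_apply _).prodMk (measurable_pi_apply _)
    have hcoup : IsCoupling (Γ.map fun γ => (γ (r k.castSucc), γ (r k.succ)))
        (μ (r k.castSucc)) (μ (r k.succ)) := by
      constructor
      · rw [Measure.map_map measurable_fst hmeas]
        exact hmarg _ (hmem _)
      · rw [Measure.map_map measurable_snd hmeas]
        exact hmarg _ (hmem _)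
    have h1 : W2sq (μ (r k.castSucc)) (μ (r k.succ))
        ≤ transportCost (Γ.map fun γ => (γ (r k.castSucc), γ (r k.succ))) := by
      unfold W2sq
      exact iInf_le_of_le (Γ.map fun γ => (γ (r k.castSucc), γ (r k.succ)))
        (iInf_le _ hcoup)
    have h2 : transportCost (Γ.map fun γ => (γ (r k.castSucc), γ (r k.succ)))
        = ∫⁻ γ, ENNReal.ofReal (‖γ (r k.succ) - γ (r k.castSucc)‖ ^ 2) ∂Γ := by
      rw [transportCost, lintegral_map ?_ hmeas]
      exact ENNReal.measurable_ofReal.comp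
        ((measurable_snd.sub measurable_fst).norm.pow_const 2)
    have hne : (ENNReal.ofReal (r k.succ - r k.castSucc))⁻¹ ≠ ⊤ :=
      ENNReal.inv_ne_top.mpr (ENNReal.ofReal_pos.mpr hΔ).ne'
    have h4 : ∫⁻ γ, F k γ ∂Γ
        = (∫⁻ γ, ENNReal.ofReal (‖γ (r k.succ) - γ (r k.castSucc)‖ ^ 2) ∂Γ)
          * (ENNReal.ofReal (r k.succ - r k.castSucc))⁻¹ := by
      rw [← lintegral_mul_const' _ _ hne]
      refine lintegral_congr fun γ => ?_
      rw [hF]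
      simp only
      rw [dist_eq_norm, norm_sub_rev, div_eq_mul_inv,
        ENNReal.ofReal_mul (by positivity), ENNReal.ofReal_inv_of_pos hΔ]
    rw [h4, div_eq_mul_inv]
    exact mul_le_mul_left (h2 ▸ h1) _
  calc ∑ k : Fin (m + 1),
      W2sq (μ (r k.castSucc)) (μ (r k.succ)) / ENNReal.ofReal (r k.succ - r k.castSucc)
      ≤ ∑ k : Fin (m + 1), ∫⁻ γ, F k γ ∂Γ := Finset.sum_le_sum fun k _ => key k
    _ = ∫⁻ γ, ∑ k : Fin (m + 1), F k γ ∂Γ :=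
        (lintegral_finset_sum _ fun k _ => hFmeas k).symm
    _ = ∫⁻ γ, ENNReal.ofReal (energySum γ r) ∂Γ := by
        refine lintegral_congr fun γ => ?_
        rw [energySum, ENNReal.ofReal_sum_of_nonneg]
        intro k _
        have hΔ : (0 : ℝ) < r k.succ - r k.castSucc :=
          sub_pos.mpr (hr.1 (Fin.castSucc_lt_succ : k.castSucc < k.succ))
        positivity
    _ ≤ ∫⁻ γ, energy γ ∂Γ := by
        refine lintegral_mono fun γ => ?_
        exact le_iSup_of_le m (le_iSup_of_le r (le_iSup_of_le hr le_rfl))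
end

section
/- For μ, ν ∈ P₂(ℝ), the quantile coupling Q(μ,ν), defined as the joint law of (F_μ^{-1}(U), F_ν^{-1}(U)) for U uniform on [0,1], satisfies ∫ |y − x|² dQ(μ,ν)(x,y) ≤ ∫ |y − x|² dP(x,y) for every coupling P of μ and ν; i.e. the quantile coupling is an optimal transport plan for the quadratic cost. -/
open Set MeasureTheory Filter
open scoped ENNReal

/-- The cumulative distribution function of a measure on ℝ. -/
noncomputable def cdf (μ : MeasureTheory.Measure ℝ) (x : ℝ) : ℝ := (μ (Set.Iic x)).toReal

/-- The quantile function (generalized inverse of the cdf) of a measure on ℝ. -/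
noncomputable def qf (μ : MeasureTheory.Measure ℝ) (u : ℝ) : ℝ := sInf {x : ℝ | u ≤ cdf μ x}

/-- The quantile coupling of two measures on ℝ: the joint law of
`(F_μ⁻¹(U), F_ν⁻¹(U))` for `U` uniform on `(0,1)`. -/
noncomputable def quantileCoupling (μ ν : MeasureTheory.Measure ℝ) :
    MeasureTheory.Measure (ℝ × ℝ) :=
  ((MeasureTheory.volume : MeasureTheory.Measure ℝ).restrict (Set.Ioo 0 1)).map
    (fun u => (qf μ u, qf ν u))

section Aux

variable {μ ν : Measure ℝ} [IsProbabilityMeasure μ] [IsProbabilityMeasure ν]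

lemma cdf_eq_pcdf (μ : Measure ℝ) [IsProbabilityMeasure μ] (x : ℝ) :
    cdf μ x = ProbabilityTheory.cdf μ x := (ProbabilityTheory.cdf_eq_real μ x).symm

lemma cdf_mono (μ : Measure ℝ) [IsProbabilityMeasure μ] : Monotone (cdf μ) := by
  intro a b hab
  rw [cdf_eq_pcdf, cdf_eq_pcdf]
  exact ProbabilityTheory.monotone_cdf μ hab

lemma cdf_nonneg' (μ : Measure ℝ) [IsProbabilityMeasure μ] (x : ℝ) : 0 ≤ cdf μ x := by
  rw [cdf_eq_pcdf]; exact ProbabilityTheory.cdf_nonneg μ x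

lemma cdf_le_one' (μ : Measure ℝ) [IsProbabilityMeasure μ] (x : ℝ) : cdf μ x ≤ 1 := by
  rw [cdf_eq_pcdf]; exact ProbabilityTheory.cdf_le_one μ x

lemma nonempty_qfSet {u : ℝ} (hu : u < 1) : {x : ℝ | u ≤ cdf μ x}.Nonempty := by
  have := (ProbabilityTheory.tendsto_cdf_atTop μ).eventually (eventually_ge_nhds hu)
  obtain ⟨w, hw⟩ := this.exists
  exact ⟨w, by simpa [cdf_eq_pcdf] using hw⟩

lemma bddBelow_qfSet {u : ℝ} (hu : 0 < u) : BddBelow {x : ℝ | u ≤ cdf μ x} := by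
  have := (ProbabilityTheory.tendsto_cdf_atBot μ).eventually (eventually_lt_nhds hu)
  obtain ⟨z, hz⟩ := this.exists
  refine ⟨z, fun x hx => ?_⟩
  by_contra hzx
  push_neg at hzx
  have : cdf μ x ≤ cdf μ z := cdf_mono μ hzx.le
  rw [cdf_eq_pcdf μ z] at this
  have hx' : u ≤ cdf μ x := hx
  have h2 : ProbabilityTheory.cdf μ z < u := hz
  have := le_trans hx' this
  linarith

lemma le_cdf_qf {u : ℝ} (hu0 : 0 < u) (hu1 : u < 1) : u ≤ cdf μ (qf μ u) := by
  have key : ∀ y, qf μ u < y → u ≤ cdf μ y := by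
    intro y hy
    obtain ⟨x, hx, hxy⟩ := (csInf_lt_iff (bddBelow_qfSet hu0) (nonempty_qfSet hu1)).1 hy
    exact le_trans hx (cdf_mono μ hxy.le)
  have hrc : Tendsto (cdf μ) (nhdsWithin (qf μ u) (Ioi (qf μ u))) (nhds (cdf μ (qf μ u))) := by
    have h := (ProbabilityTheory.cdf μ).right_continuous (qf μ u)
    have h2 : Tendsto (fun x => ProbabilityTheory.cdf μ x)
        (nhdsWithin (qf μ u) (Ioi (qf μ u))) (nhds (ProbabilityTheory.cdf μ (qf μ u))) :=
      h.mono_left (nhdsWithin_mono _ Ioi_subset_Ici_self)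
    have hfun : cdf μ = fun x => ProbabilityTheory.cdf μ x := funext (cdf_eq_pcdf μ)
    rw [hfun]
    exact h2
  exact ge_of_tendsto hrc (eventually_nhdsWithin_of_forall fun y hy => key y hy)

lemma qf_le_iff {u x : ℝ} (hu0 : 0 < u) (hu1 : u < 1) : qf μ u ≤ x ↔ u ≤ cdf μ x := by
  constructor
  · intro h
    exact le_trans (le_cdf_qf hu0 hu1) (cdf_mono μ h)
  · intro h
    exact csInf_le (bddBelow_qfSet hu0) h

lemma lt_qf_iff {u x : ℝ} (hu0 : 0 < u) (hu1 : u < 1) : x < qf μ u ↔ cdf μ x < u := by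
  rw [← not_le, ← not_le, qf_le_iff hu0 hu1]

lemma qf_monotoneOn : MonotoneOn (qf μ) (Ioo (0:ℝ) 1) := by
  intro u hu v hv huv
  exact csInf_le_csInf (bddBelow_qfSet hu.1) (nonempty_qfSet hv.2)
    (fun x hx => le_trans huv hx)

lemma qf_aemeasurable : AEMeasurable (qf μ) (volume.restrict (Ioo (0:ℝ) 1)) :=
  aemeasurable_restrict_of_monotoneOn measurableSet_Ioo qf_monotoneOn

instance : IsProbabilityMeasure ((volume : Measure ℝ).restrict (Ioo (0:ℝ) 1)) := by
  constructor
  simp [Real.volume_Ioo]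

lemma map_qf : ((volume : Measure ℝ).restrict (Ioo (0:ℝ) 1)).map (qf μ) = μ := by
  have hae : AEMeasurable (qf μ) (volume.restrict (Ioo (0:ℝ) 1)) := qf_aemeasurable
  haveI : IsProbabilityMeasure (((volume : Measure ℝ).restrict (Ioo (0:ℝ) 1)).map (qf μ)) :=
    Measure.isProbabilityMeasure_map hae
  refine Measure.ext_of_Iic _ _ (fun x => ?_)
  rw [Measure.map_apply_of_aemeasurable hae measurableSet_Iic,
    Measure.restrict_apply' measurableSet_Ioo]
  have hset : qf μ ⁻¹' Iic x ∩ Ioo (0:ℝ) 1 = Ioc 0 (cdf μ x) \ {1} := by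
    ext u
    simp only [mem_inter_iff, mem_preimage, mem_Iic, mem_Ioo, mem_diff, mem_Ioc,
      mem_singleton_iff]
    constructor
    · rintro ⟨h1, h2, h3⟩
      exact ⟨⟨h2, (qf_le_iff h2 h3).1 h1⟩, ne_of_lt h3⟩
    · rintro ⟨⟨h1, h2⟩, h3⟩
      have hu1 : u < 1 := lt_of_le_of_ne (le_trans h2 (cdf_le_one' μ x)) h3
      exact ⟨(qf_le_iff h1 hu1).2 h2, h1, hu1⟩
  rw [hset, measure_diff_null (Real.volume_singleton), Real.volume_Ioc,
    cdf_eq_pcdf, sub_zero, ProbabilityTheory.ofReal_cdf]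

lemma survival_eq (μ : Measure ℝ) [IsProbabilityMeasure μ] (s : ℝ) :
    μ (Ioi s) = ENNReal.ofReal (1 - cdf μ s) := by
  have h := measure_compl (μ := μ) (s := Iic s) measurableSet_Iic (measure_ne_top μ _)
  rw [compl_Iic] at h
  rw [h, measure_univ, ENNReal.ofReal_sub _ (cdf_nonneg' μ s), ENNReal.ofReal_one,
    cdf_eq_pcdf, ProbabilityTheory.ofReal_cdf]

lemma pair_aemeasurable :
    AEMeasurable (fun u => (qf μ u, qf ν u)) (volume.restrict (Ioo (0:ℝ) 1)) :=
  AEMeasurable.prodMk qf_aemeasurable qf_aemeasurable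

lemma qc_fst : (quantileCoupling μ ν).map Prod.fst = μ := by
  rw [quantileCoupling,
    AEMeasurable.map_map_of_aemeasurable measurable_fst.aemeasurable pair_aemeasurable]
  exact map_qf

lemma qc_snd : (quantileCoupling μ ν).map Prod.snd = ν := by
  rw [quantileCoupling,
    AEMeasurable.map_map_of_aemeasurable measurable_snd.aemeasurable pair_aemeasurable]
  exact map_qf

lemma qc_rect (s t : ℝ) :
    quantileCoupling μ ν (Ioi s ×ˢ Ioi t) = min (μ (Ioi s)) (ν (Ioi t)) := by
  rw [quantileCoupling, Measure.map_apply_of_aemeasurable pair_aemeasurable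
    (measurableSet_Ioi.prod measurableSet_Ioi), Measure.restrict_apply' measurableSet_Ioo]
  have hset : (fun u => (qf μ u, qf ν u)) ⁻¹' (Ioi s ×ˢ Ioi t) ∩ Ioo (0:ℝ) 1
      = Ioo (max (cdf μ s) (cdf ν t)) 1 := by
    ext u
    simp only [mem_inter_iff, mem_preimage, mem_prod, mem_Ioi, mem_Ioo, max_lt_iff]
    constructor
    · rintro ⟨⟨h1, h2⟩, h3, h4⟩
      exact ⟨⟨(lt_qf_iff h3 h4).1 h1, (lt_qf_iff h3 h4).1 h2⟩, h4⟩
    · rintro ⟨⟨h1, h2⟩, h4⟩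
      have h3 : 0 < u := lt_of_le_of_lt (cdf_nonneg' μ s) h1
      exact ⟨⟨(lt_qf_iff h3 h4).2 h1, (lt_qf_iff h3 h4).2 h2⟩, h3, h4⟩
  rw [hset, Real.volume_Ioo, survival_eq μ s, survival_eq ν t,
    show (1:ℝ) - max (cdf μ s) (cdf ν t) = min (1 - cdf μ s) (1 - cdf ν t) by
      rcases le_total (cdf μ s) (cdf ν t) with h | h
      · rw [max_eq_right h, min_eq_right (by linarith)]
      · rw [max_eq_left h, min_eq_left (by linarith)],
    (show Monotone ENNReal.ofReal from fun _ _ h => ENNReal.ofReal_le_ofReal h).map_min]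

end Aux

section Hoeffding

variable {μ ν : Measure ℝ} [IsProbabilityMeasure μ] [IsProbabilityMeasure ν]

/-- The elementary function `f s x = 1_{s < x} - 1_{s < 0}`. -/
noncomputable def ff (s x : ℝ) : ℝ :=
  (if s < x then (1:ℝ) else 0) - (if s < 0 then (1:ℝ) else 0)

lemma measurable_ff : Measurable (fun p : ℝ × ℝ => ff p.1 p.2) := by
  unfold ff
  exact (Measurable.ite (measurableSet_lt measurable_fst measurable_snd)
    measurable_const measurable_const).sub
    (Measurable.ite (measurableSet_lt measurable_fst measurable_const)
    measurable_const measurable_const)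

lemma ff_of_nonneg {x : ℝ} (hx : 0 ≤ x) :
    (fun s => ff s x) = (Ico (0:ℝ) x).indicator 1 := by
  funext s
  unfold ff
  simp only [indicator_apply, mem_Ico, Pi.one_apply]
  split_ifs <;> simp_all <;> linarith

lemma ff_of_neg {x : ℝ} (hx : x < 0) :
    (fun s => ff s x) = fun s => -((Ico x 0).indicator 1 s) := by
  funext s
  unfold ff
  simp only [indicator_apply, mem_Ico, Pi.one_apply]
  split_ifs <;> simp_all <;> linarith

lemma integrable_ff (x : ℝ) : Integrable (fun s => ff s x) volume := by
  rcases le_or_gt 0 x with hx | hx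
  · rw [ff_of_nonneg hx]
    rw [integrable_indicator_iff measurableSet_Ico]
    exact integrableOn_const measure_Ico_lt_top.ne
  · rw [ff_of_neg hx]
    apply Integrable.neg
    rw [integrable_indicator_iff measurableSet_Ico]
    exact integrableOn_const measure_Ico_lt_top.ne

lemma integral_ff (x : ℝ) : ∫ s, ff s x = x := by
  rcases le_or_gt 0 x with hx | hx
  · rw [ff_of_nonneg hx, integral_indicator_one measurableSet_Ico, measureReal_def, Real.volume_Ico,
      ENNReal.toReal_ofReal (by linarith), sub_zero]
  · rw [ff_of_neg hx, integral_neg, integral_indicator_one measurableSet_Ico, measureReal_def, Real.volume_Ico,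
      ENNReal.toReal_ofReal (by linarith)]
    ring

lemma lintegral_ff (x : ℝ) : ∫⁻ s, (‖ff s x‖₊ : ℝ≥0∞) ∂volume ≤ ENNReal.ofReal |x| := by
  rcases le_or_gt 0 x with hx | hx
  · calc ∫⁻ s, (‖ff s x‖₊ : ℝ≥0∞) ∂volume
        = ∫⁻ s, (Ico (0:ℝ) x).indicator (fun _ => (1:ℝ≥0∞)) s ∂volume := by
          apply lintegral_congr
          intro s
          have h0 : ff s x = (Ico (0:ℝ) x).indicator 1 s := congrFun (ff_of_nonneg hx) s
          rw [h0]
          by_cases h : s ∈ Ico (0:ℝ) x <;> simp [Set.indicator, h]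
      _ = volume (Ico (0:ℝ) x) := by
          rw [lintegral_indicator measurableSet_Ico]
          simp
      _ ≤ ENNReal.ofReal |x| := by
          rw [Real.volume_Ico, sub_zero, abs_of_nonneg hx]
  · calc ∫⁻ s, (‖ff s x‖₊ : ℝ≥0∞) ∂volume
        = ∫⁻ s, (Ico x (0:ℝ)).indicator (fun _ => (1:ℝ≥0∞)) s ∂volume := by
          apply lintegral_congr
          intro s
          have h0 : ff s x = -((Ico x (0:ℝ)).indicator 1 s) := congrFun (ff_of_neg hx) s
          rw [h0]
          by_cases h : s ∈ Ico x (0:ℝ) <;> simp [Set.indicator, h]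
      _ = volume (Ico x (0:ℝ)) := by
          rw [lintegral_indicator measurableSet_Ico]
          simp
      _ ≤ ENNReal.ofReal |x| := by
          rw [Real.volume_Ico, abs_of_neg hx, zero_sub]

variable {P : Measure (ℝ × ℝ)}

lemma coupling_prob (hfst : P.map Prod.fst = μ) : IsProbabilityMeasure P := by
  constructor
  have h : P univ = μ univ := by
    rw [← hfst, Measure.map_apply measurable_fst MeasurableSet.univ, preimage_univ]
  rw [h, measure_univ]

lemma integrable_sq (hμ2 : ∫⁻ x, ENNReal.ofReal (x ^ 2) ∂μ ≠ ⊤) :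
    Integrable (fun x : ℝ => x ^ 2) μ := by
  refine ⟨(measurable_id.pow_const 2).aestronglyMeasurable, ?_⟩
  rw [hasFiniteIntegral_iff_ofReal (Eventually.of_forall fun x => sq_nonneg x)]
  exact lt_top_iff_ne_top.2 hμ2

lemma integrable_fst_sq (hfst : P.map Prod.fst = μ)
    (hμ2 : ∫⁻ x, ENNReal.ofReal (x ^ 2) ∂μ ≠ ⊤) :
    Integrable (fun p : ℝ × ℝ => p.1 ^ 2) P := by
  have h := integrable_sq hμ2
  rw [← hfst] at h
  exact (integrable_map_measure (measurable_id.pow_const 2).aestronglyMeasurable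
    measurable_fst.aemeasurable).1 h

lemma integrable_snd_sq (hsnd : P.map Prod.snd = ν)
    (hν2 : ∫⁻ x, ENNReal.ofReal (x ^ 2) ∂ν ≠ ⊤) :
    Integrable (fun p : ℝ × ℝ => p.2 ^ 2) P := by
  have h := integrable_sq hν2
  rw [← hsnd] at h
  exact (integrable_map_measure (measurable_id.pow_const 2).aestronglyMeasurable
    measurable_snd.aemeasurable).1 h

lemma integrable_mul (hfst : P.map Prod.fst = μ) (hsnd : P.map Prod.snd = ν)
    (hμ2 : ∫⁻ x, ENNReal.ofReal (x ^ 2) ∂μ ≠ ⊤)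
    (hν2 : ∫⁻ x, ENNReal.ofReal (x ^ 2) ∂ν ≠ ⊤) :
    Integrable (fun p : ℝ × ℝ => p.1 * p.2) P := by
  refine Integrable.mono' ((integrable_fst_sq hfst hμ2).add (integrable_snd_sq hsnd hν2))
    (measurable_fst.mul measurable_snd).aestronglyMeasurable
    (Eventually.of_forall fun p => ?_)
  simp only [Pi.add_apply]
  rw [Real.norm_eq_abs, abs_mul]
  nlinarith [sq_nonneg (|p.1| - |p.2|), sq_abs p.1, sq_abs p.2, abs_nonneg p.1, abs_nonneg p.2]

lemma integrable_cost (hfst : P.map Prod.fst = μ) (hsnd : P.map Prod.snd = ν)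
    (hμ2 : ∫⁻ x, ENNReal.ofReal (x ^ 2) ∂μ ≠ ⊤)
    (hν2 : ∫⁻ x, ENNReal.ofReal (x ^ 2) ∂ν ≠ ⊤) :
    Integrable (fun p : ℝ × ℝ => (p.2 - p.1) ^ 2) P := by
  have h : (fun p : ℝ × ℝ => (p.2 - p.1) ^ 2)
      = fun p => (p.1 ^ 2 + p.2 ^ 2) - 2 * (p.1 * p.2) := by
    funext p; ring
  rw [h]
  exact ((integrable_fst_sq hfst hμ2).add (integrable_snd_sq hsnd hν2)).sub
    ((integrable_mul hfst hsnd hμ2 hν2).const_mul 2)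

lemma integral_cost_eq (hfst : P.map Prod.fst = μ) (hsnd : P.map Prod.snd = ν)
    (hμ2 : ∫⁻ x, ENNReal.ofReal (x ^ 2) ∂μ ≠ ⊤)
    (hν2 : ∫⁻ x, ENNReal.ofReal (x ^ 2) ∂ν ≠ ⊤) :
    ∫ p, (p.2 - p.1) ^ 2 ∂P
      = (∫ x, x ^ 2 ∂μ) + (∫ y, y ^ 2 ∂ν) - 2 * ∫ p, p.1 * p.2 ∂P := by
  have h : (fun p : ℝ × ℝ => (p.2 - p.1) ^ 2)
      = fun p => (p.1 ^ 2 + p.2 ^ 2) - 2 * (p.1 * p.2) := by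
    funext p; ring
  have iA : Integrable (fun p : ℝ × ℝ => p.1 ^ 2 + p.2 ^ 2) P :=
    (integrable_fst_sq hfst hμ2).add (integrable_snd_sq hsnd hν2)
  have iB : Integrable (fun p : ℝ × ℝ => 2 * (p.1 * p.2)) P :=
    (integrable_mul hfst hsnd hμ2 hν2).const_mul 2
  have hsq : Measurable fun x : ℝ => x ^ 2 := measurable_id.pow_const 2
  rw [h, integral_sub iA iB,
    integral_add (integrable_fst_sq hfst hμ2) (integrable_snd_sq hsnd hν2),
    integral_const_mul]
  have h1 : ∫ p, p.1 ^ 2 ∂P = ∫ x, x ^ 2 ∂μ := by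
    rw [← hfst, integral_map measurable_fst.aemeasurable hsq.aestronglyMeasurable]
  have h2 : ∫ p, p.2 ^ 2 ∂P = ∫ y, y ^ 2 ∂ν := by
    rw [← hsnd, integral_map measurable_snd.aemeasurable hsq.aestronglyMeasurable]
  rw [h1, h2]

lemma measurable_G :
    Measurable (fun z : (ℝ × ℝ) × (ℝ × ℝ) => ff z.2.1 z.1.1 * ff z.2.2 z.1.2) := by
  have h1 : Measurable (fun z : (ℝ × ℝ) × (ℝ × ℝ) => ff z.2.1 z.1.1) :=
    measurable_ff.comp ((measurable_snd.fst).prodMk (measurable_fst.fst))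
  have h2 : Measurable (fun z : (ℝ × ℝ) × (ℝ × ℝ) => ff z.2.2 z.1.2) :=
    measurable_ff.comp ((measurable_snd.snd).prodMk (measurable_fst.snd))
  exact h1.mul h2

lemma integrable_G [IsProbabilityMeasure P] (hfst : P.map Prod.fst = μ)
    (hsnd : P.map Prod.snd = ν)
    (hμ2 : ∫⁻ x, ENNReal.ofReal (x ^ 2) ∂μ ≠ ⊤)
    (hν2 : ∫⁻ x, ENNReal.ofReal (x ^ 2) ∂ν ≠ ⊤) :
    Integrable (fun z : (ℝ × ℝ) × (ℝ × ℝ) => ff z.2.1 z.1.1 * ff z.2.2 z.1.2)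
      (P.prod ((volume : Measure ℝ).prod volume)) := by
  refine ⟨measurable_G.aestronglyMeasurable, ?_⟩
  have hmeas : Measurable (fun z : (ℝ × ℝ) × (ℝ × ℝ) =>
      (‖ff z.2.1 z.1.1 * ff z.2.2 z.1.2‖₊ : ℝ≥0∞)) := measurable_G.nnnorm.coe_nnreal_ennreal
  rw [hasFiniteIntegral_def]
  calc ∫⁻ z, (‖ff z.2.1 z.1.1 * ff z.2.2 z.1.2‖₊ : ℝ≥0∞)
        ∂(P.prod ((volume : Measure ℝ).prod volume))
      = ∫⁻ p, ∫⁻ q, (‖ff q.1 p.1 * ff q.2 p.2‖₊ : ℝ≥0∞)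
          ∂((volume : Measure ℝ).prod volume) ∂P := lintegral_prod _ hmeas.aemeasurable
    _ ≤ ∫⁻ p, ENNReal.ofReal (p.1 ^ 2) + ENNReal.ofReal (p.2 ^ 2) ∂P := by
        apply lintegral_mono
        intro p
        have hinner : ∫⁻ q, (‖ff q.1 p.1 * ff q.2 p.2‖₊ : ℝ≥0∞)
            ∂((volume : Measure ℝ).prod volume)
            = (∫⁻ s, (‖ff s p.1‖₊ : ℝ≥0∞) ∂volume) * ∫⁻ t, (‖ff t p.2‖₊ : ℝ≥0∞) ∂volume := by
          have hm1 : AEMeasurable (fun s => (‖ff s p.1‖₊ : ℝ≥0∞)) volume :=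
            ((measurable_ff.comp (measurable_id.prodMk measurable_const)).nnnorm.coe_nnreal_ennreal).aemeasurable
          have hm2 : AEMeasurable (fun t => (‖ff t p.2‖₊ : ℝ≥0∞)) volume :=
            ((measurable_ff.comp (measurable_id.prodMk measurable_const)).nnnorm.coe_nnreal_ennreal).aemeasurable
          rw [show (fun q : ℝ × ℝ => (‖ff q.1 p.1 * ff q.2 p.2‖₊ : ℝ≥0∞))
              = fun q : ℝ × ℝ => ((‖ff q.1 p.1‖₊ : ℝ≥0∞) * (‖ff q.2 p.2‖₊ : ℝ≥0∞)) from
            funext fun q => by rw [nnnorm_mul, ENNReal.coe_mul]]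
          exact lintegral_prod_mul hm1 hm2
        refine le_trans (le_of_eq hinner) ?_
        calc (∫⁻ s, (‖ff s p.1‖₊ : ℝ≥0∞) ∂volume) * ∫⁻ t, (‖ff t p.2‖₊ : ℝ≥0∞) ∂volume
            ≤ ENNReal.ofReal |p.1| * ENNReal.ofReal |p.2| :=
              mul_le_mul' (lintegral_ff p.1) (lintegral_ff p.2)
          _ = ENNReal.ofReal (|p.1| * |p.2|) :=
              (ENNReal.ofReal_mul (abs_nonneg p.1)).symm
          _ ≤ ENNReal.ofReal (p.1 ^ 2 + p.2 ^ 2) := by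
              apply ENNReal.ofReal_le_ofReal
              nlinarith [sq_nonneg (|p.1| - |p.2|), sq_abs p.1, sq_abs p.2,
                abs_nonneg p.1, abs_nonneg p.2]
          _ ≤ ENNReal.ofReal (p.1 ^ 2) + ENNReal.ofReal (p.2 ^ 2) :=
              ENNReal.ofReal_add_le
    _ = (∫⁻ p, ENNReal.ofReal (p.1 ^ 2) ∂P) + ∫⁻ p, ENNReal.ofReal (p.2 ^ 2) ∂P := by
        apply lintegral_add_left
        exact (measurable_fst.pow_const 2).ennreal_ofReal
    _ < ⊤ := by
        have hgm : Measurable fun x : ℝ => ENNReal.ofReal (x ^ 2) :=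
          (measurable_id.pow_const 2).ennreal_ofReal
        have e1 : ∫⁻ p, ENNReal.ofReal (p.1 ^ 2) ∂P = ∫⁻ x, ENNReal.ofReal (x ^ 2) ∂μ := by
          rw [← hfst, lintegral_map hgm measurable_fst]
        have e2 : ∫⁻ p, ENNReal.ofReal (p.2 ^ 2) ∂P = ∫⁻ x, ENNReal.ofReal (x ^ 2) ∂ν := by
          rw [← hsnd, lintegral_map hgm measurable_snd]
        rw [e1, e2]
        exact ENNReal.add_lt_top.2 ⟨lt_top_iff_ne_top.2 hμ2, lt_top_iff_ne_top.2 hν2⟩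

lemma swap_eq [IsProbabilityMeasure P] (hfst : P.map Prod.fst = μ)
    (hsnd : P.map Prod.snd = ν)
    (hμ2 : ∫⁻ x, ENNReal.ofReal (x ^ 2) ∂μ ≠ ⊤)
    (hν2 : ∫⁻ x, ENNReal.ofReal (x ^ 2) ∂ν ≠ ⊤) :
    ∫ p, p.1 * p.2 ∂P
      = ∫ q, (∫ p, ff q.1 p.1 * ff q.2 p.2 ∂P) ∂((volume : Measure ℝ).prod volume) := by
  have h1 : ∀ p : ℝ × ℝ,
      ∫ q, ff q.1 p.1 * ff q.2 p.2 ∂((volume : Measure ℝ).prod volume) = p.1 * p.2 := by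
    intro p
    rw [integral_prod_mul (f := fun s => ff s p.1) (g := fun t => ff t p.2),
      integral_ff, integral_ff]
  calc ∫ p, p.1 * p.2 ∂P
      = ∫ p, ∫ q, ff q.1 p.1 * ff q.2 p.2 ∂((volume : Measure ℝ).prod volume) ∂P :=
        integral_congr_ae (Eventually.of_forall fun p => (h1 p).symm)
    _ = ∫ q, (∫ p, ff q.1 p.1 * ff q.2 p.2 ∂P) ∂((volume : Measure ℝ).prod volume) :=
        integral_integral_swap (integrable_G hfst hsnd hμ2 hν2)

lemma inner_eval [IsProbabilityMeasure P] (hfst : P.map Prod.fst = μ)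
    (hsnd : P.map Prod.snd = ν) (s t : ℝ) :
    ∫ p, ff s p.1 * ff t p.2 ∂P = (P (Ioi s ×ˢ Ioi t)).toReal
      - (if t < 0 then (1:ℝ) else 0) * (μ (Ioi s)).toReal
      - (if s < 0 then (1:ℝ) else 0) * (ν (Ioi t)).toReal
      + (if s < 0 then (1:ℝ) else 0) * (if t < 0 then (1:ℝ) else 0) := by
  set a := (if s < 0 then (1:ℝ) else 0) with ha
  set b := (if t < 0 then (1:ℝ) else 0) with hb
  have hpt : ∀ p : ℝ × ℝ, ff s p.1 * ff t p.2
      = (Ioi s ×ˢ Ioi t).indicator 1 p - b * (Prod.fst ⁻¹' Ioi s).indicator 1 p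
        - a * (Prod.snd ⁻¹' Ioi t).indicator 1 p + a * b := by
    intro p
    unfold ff
    rw [← ha, ← hb]
    simp only [indicator_apply, mem_prod, mem_preimage, mem_Ioi, Pi.one_apply]
    by_cases h1 : s < p.1 <;> by_cases h2 : t < p.2 <;> simp [h1, h2] <;> ring
  have hmr : MeasurableSet (Ioi s ×ˢ Ioi t : Set (ℝ × ℝ)) :=
    measurableSet_Ioi.prod measurableSet_Ioi
  have hm1 : MeasurableSet (Prod.fst ⁻¹' Ioi s : Set (ℝ × ℝ)) :=
    measurable_fst measurableSet_Ioi
  have hm2 : MeasurableSet (Prod.snd ⁻¹' Ioi t : Set (ℝ × ℝ)) :=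
    measurable_snd measurableSet_Ioi
  have i1 : Integrable ((Ioi s ×ˢ Ioi t).indicator (1 : ℝ × ℝ → ℝ)) P := by
    rw [integrable_indicator_iff hmr]
    exact integrableOn_const (measure_lt_top P _).ne
  have i2 : Integrable ((Prod.fst ⁻¹' Ioi s).indicator (1 : ℝ × ℝ → ℝ)) P := by
    rw [integrable_indicator_iff hm1]
    exact integrableOn_const (measure_lt_top P _).ne
  have i3 : Integrable ((Prod.snd ⁻¹' Ioi t).indicator (1 : ℝ × ℝ → ℝ)) P := by
    rw [integrable_indicator_iff hm2]
    exact integrableOn_const (measure_lt_top P _).ne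
  have hrw : ∫ p, ff s p.1 * ff t p.2 ∂P
      = ∫ p, ((Ioi s ×ˢ Ioi t).indicator 1 p - b * (Prod.fst ⁻¹' Ioi s).indicator 1 p
        - a * (Prod.snd ⁻¹' Ioi t).indicator 1 p + a * b) ∂P :=
    integral_congr_ae (Eventually.of_forall hpt)
  have j4 : Integrable (fun p : ℝ × ℝ => b * (Prod.fst ⁻¹' Ioi s).indicator 1 p) P :=
    i2.const_mul b
  have j5 : Integrable (fun p : ℝ × ℝ => a * (Prod.snd ⁻¹' Ioi t).indicator 1 p) P :=
    i3.const_mul a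
  have j2 : Integrable (fun p : ℝ × ℝ => (Ioi s ×ˢ Ioi t).indicator 1 p
      - b * (Prod.fst ⁻¹' Ioi s).indicator 1 p) P := i1.sub j4
  have j3 : Integrable (fun p : ℝ × ℝ => (Ioi s ×ˢ Ioi t).indicator 1 p
      - b * (Prod.fst ⁻¹' Ioi s).indicator 1 p
      - a * (Prod.snd ⁻¹' Ioi t).indicator 1 p) P := j2.sub j5
  have e1 : P (Prod.fst ⁻¹' Ioi s) = μ (Ioi s) := by
    rw [← hfst, Measure.map_apply measurable_fst measurableSet_Ioi]
  have e2 : P (Prod.snd ⁻¹' Ioi t) = ν (Ioi t) := by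
    rw [← hsnd, Measure.map_apply measurable_snd measurableSet_Ioi]
  rw [hrw, integral_add j3 (integrable_const (a * b)), integral_sub j2 j5,
    integral_sub i1 j4, integral_const_mul, integral_const_mul,
    integral_const, integral_indicator_one hmr, integral_indicator_one hm1,
    integral_indicator_one hm2, measureReal_def, measureReal_def, measureReal_def, e1, e2]
  simp [measure_univ]

lemma inner_le [IsProbabilityMeasure P] (hfst : P.map Prod.fst = μ)
    (hsnd : P.map Prod.snd = ν) (s t : ℝ) :
    ∫ p, ff s p.1 * ff t p.2 ∂P
      ≤ ∫ p, ff s p.1 * ff t p.2 ∂(quantileCoupling μ ν) := by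
  haveI : IsProbabilityMeasure (quantileCoupling μ ν) := coupling_prob qc_fst
  rw [inner_eval hfst hsnd, inner_eval (qc_fst (μ := μ) (ν := ν)) qc_snd]
  have hb1 : P (Ioi s ×ˢ Ioi t) ≤ μ (Ioi s) := by
    have h' : P (Ioi s ×ˢ Ioi t) ≤ P (Prod.fst ⁻¹' Ioi s) :=
      measure_mono (fun p hp => hp.1)
    rwa [← hfst, Measure.map_apply measurable_fst measurableSet_Ioi]
  have hb2 : P (Ioi s ×ˢ Ioi t) ≤ ν (Ioi t) := by
    have h' : P (Ioi s ×ˢ Ioi t) ≤ P (Prod.snd ⁻¹' Ioi t) :=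
      measure_mono (fun p hp => hp.2)
    rwa [← hsnd, Measure.map_apply measurable_snd measurableSet_Ioi]
  have h1 : P (Ioi s ×ˢ Ioi t) ≤ quantileCoupling μ ν (Ioi s ×ˢ Ioi t) := by
    rw [qc_rect]
    exact le_min hb1 hb2
  have h2 := ENNReal.toReal_mono (measure_ne_top _ _) h1
  linarith

lemma mul_integral_le [IsProbabilityMeasure P] (hfst : P.map Prod.fst = μ)
    (hsnd : P.map Prod.snd = ν)
    (hμ2 : ∫⁻ x, ENNReal.ofReal (x ^ 2) ∂μ ≠ ⊤)
    (hν2 : ∫⁻ x, ENNReal.ofReal (x ^ 2) ∂ν ≠ ⊤) :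
    ∫ p, p.1 * p.2 ∂P ≤ ∫ p, p.1 * p.2 ∂(quantileCoupling μ ν) := by
  haveI : IsProbabilityMeasure (quantileCoupling μ ν) := coupling_prob qc_fst
  rw [swap_eq hfst hsnd hμ2 hν2,
    swap_eq (qc_fst (μ := μ) (ν := ν)) qc_snd hμ2 hν2]
  refine integral_mono ?_ ?_ ?_
  · exact (integrable_G hfst hsnd hμ2 hν2).integral_prod_right
  · exact (integrable_G (qc_fst (μ := μ) (ν := ν)) qc_snd hμ2 hν2).integral_prod_right
  · intro q
    exact inner_le hfst hsnd q.1 q.2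

end Hoeffding


/-- For `μ, ν ∈ P₂(ℝ)`, the quantile coupling minimizes the quadratic cost among all
couplings of `μ` and `ν`: it is an optimal transport plan. -/
theorem stmt_15 (μ ν : Measure ℝ) [IsProbabilityMeasure μ] [IsProbabilityMeasure ν]
    (hμ2 : ∫⁻ x, ENNReal.ofReal (x ^ 2) ∂μ ≠ ⊤)
    (hν2 : ∫⁻ x, ENNReal.ofReal (x ^ 2) ∂ν ≠ ⊤)
    (P : Measure (ℝ × ℝ)) (hP : P.map Prod.fst = μ ∧ P.map Prod.snd = ν) :
    ∫⁻ p, ENNReal.ofReal ((p.2 - p.1) ^ 2) ∂(quantileCoupling μ ν)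
      ≤ ∫⁻ p, ENNReal.ofReal ((p.2 - p.1) ^ 2) ∂P := by
  obtain ⟨hfst, hsnd⟩ := hP
  haveI hPprob : IsProbabilityMeasure P := coupling_prob hfst
  haveI hQprob : IsProbabilityMeasure (quantileCoupling μ ν) :=
    coupling_prob (qc_fst (μ := μ) (ν := ν))
  have icP := integrable_cost hfst hsnd hμ2 hν2
  have icQ := integrable_cost (qc_fst (μ := μ) (ν := ν)) qc_snd hμ2 hν2
  rw [← ofReal_integral_eq_lintegral_ofReal icQ
      (Eventually.of_forall fun p => sq_nonneg _),
    ← ofReal_integral_eq_lintegral_ofReal icP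
      (Eventually.of_forall fun p => sq_nonneg _)]
  apply ENNReal.ofReal_le_ofReal
  rw [integral_cost_eq (qc_fst (μ := μ) (ν := ν)) qc_snd hμ2 hν2,
    integral_cost_eq hfst hsnd hμ2 hν2]
  have := mul_integral_le hfst hsnd hμ2 hν2
  linarith
end
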